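/- For all nonnegative integers n and k, the sum over i+j=k of binom(n,2i)*binom(n,2j) is congruent modulo 2 to 0 if k is odd, and to binom(n,k) if k is even. -/

import Mathlib

theorem stmt_0 (n k : ℕ) :
    (∑ p ∈ Finset.HasAntidiagonal.antidiagonal k, n.choose (2 * p.1) * n.choose (2 * p.2)) ≡
      (if Odd k then 0 else n.choose k) [MOD 2] := by
  rw [← ZMod.natCast_eq_natCast_iff]
  push_cast
  set f : ℕ × ℕ → ZMod 2 := fun p => (n.choose (2 * p.1) : ZMod 2) * n.choose (2 * p.2)
    with hf
  by_cases hk : Odd k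
  · simp only [hk, if_true, Nat.cast_zero]
    refine Finset.sum_involution (fun p _ => p.swap) ?_ ?_ ?_ ?_
    · intro p hp
      simpa [mul_comm] using
        CharTwo.add_self_eq_zero ((n.choose (2 * p.1) : ZMod 2) * n.choose (2 * p.2))
    · intro p hp _
      intro h
      have h1 : p.1 = p.2 := (congrArg Prod.fst h).symm.trans rfl
      rw [Finset.HasAntidiagonal.mem_antidiagonal] at hp
      rw [h1] at hp
      exact (Nat.not_even_iff_odd.mpr hk) ⟨p.2, by omega⟩
    · intro p hp
      rw [Finset.HasAntidiagonal.mem_antidiagonal] at hp ⊢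
      simpa [add_comm] using hp
    · intro p hp; simp
  · simp only [hk, if_false]
    obtain ⟨m, hm⟩ := Nat.not_odd_iff_even.mp hk
    have hmem : (m, m) ∈ Finset.HasAntidiagonal.antidiagonal k := by
      rw [Finset.HasAntidiagonal.mem_antidiagonal]; omega
    rw [← Finset.add_sum_erase _ _ hmem]
    have hzero : ∑ p ∈ (Finset.HasAntidiagonal.antidiagonal k).erase (m, m),
        (n.choose (2 * p.1) : ZMod 2) * n.choose (2 * p.2) = 0 := by
      refine Finset.sum_involution (fun p _ => p.swap) ?_ ?_ ?_ ?_
      · intro p hp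
        simpa [mul_comm] using
          CharTwo.add_self_eq_zero ((n.choose (2 * p.1) : ZMod 2) * n.choose (2 * p.2))
      · intro p hp _
        intro h
        have h1 : p.2 = p.1 := congrArg Prod.fst h
        rw [Finset.mem_erase, Finset.HasAntidiagonal.mem_antidiagonal] at hp
        exact hp.1 (by ext <;> simp <;> omega)
      · intro p hp
        rw [Finset.mem_erase, Finset.HasAntidiagonal.mem_antidiagonal] at hp ⊢
        refine ⟨fun h => hp.1 ?_, by simpa [add_comm] using hp.2⟩
        have h1 : p.2 = m := congrArg Prod.fst h
        have h2 : p.1 = m := congrArg Prod.snd h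
        ext <;> simp [h1, h2]
      · intro p hp; simp
    rw [hzero, add_zero]
    have hk2 : 2 * m = k := by omega
    rw [hk2, ← sq, ZMod.pow_card]
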